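/- (Galois, 1828) A real number x is a reduced quadratic irrational if and only if x is irrational and its continued fraction expansion is purely periodic, i.e. its sequence of partial quotients (a_n) satisfies: there exists T ≥ 1 such that a_{n+T} = a_n for all n ≥ 0 (equivalently, x_T = x for some T ≥ 1). -/

import Mathlib

/-- The complete quotients of a real number `x`:
`cq x 0 = x` and `cq x (n+1) = 1 / (cq x n - ⌊cq x n⌋)`. -/
noncomputable def cq (x : ℝ) : ℕ → ℝ
  | 0 => x
  | n + 1 => (Int.fract (cq x n))⁻¹

/-- The partial quotients of a real number `x`: `pq x n = ⌊cq x n⌋`. -/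
noncomputable def pq (x : ℝ) (n : ℕ) : ℤ := ⌊cq x n⌋

lemma fract_pos_of_irrational {x : ℝ} (hx : Irrational x) : 0 < Int.fract x := by
  rcases lt_or_eq_of_le (Int.fract_nonneg x) with h | h
  · exact h
  · exact absurd (by linarith [Int.fract_add_floor x] : x = (⌊x⌋ : ℝ)) (hx.ne_int ⌊x⌋)

lemma cq_irrational {x : ℝ} (hx : Irrational x) : ∀ n, Irrational (cq x n)
  | 0 => hx
  | n + 1 => by
    have h := cq_irrational hx n
    have h2 : Irrational (Int.fract (cq x n)) := by
      rw [Int.fract]; exact h.sub_intCast ⌊cq x n⌋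
    exact h2.inv

lemma one_lt_cq_succ {x : ℝ} (hx : Irrational x) (n : ℕ) : 1 < cq x (n + 1) := by
  have h := cq_irrational hx n
  have h1 : 0 < Int.fract (cq x n) := fract_pos_of_irrational h
  have h2 : Int.fract (cq x n) < 1 := Int.fract_lt_one _
  rw [show cq x (n+1) = (Int.fract (cq x n))⁻¹ from rfl]
  exact one_lt_inv_iff₀.mpr ⟨h1, h2⟩

lemma cq_pos {x : ℝ} (hx : Irrational x) (hx1 : 1 < x) (n : ℕ) : 1 < cq x n := by
  cases n with
  | zero => exact hx1
  | succ n => exact one_lt_cq_succ hx n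

lemma pq_one_le {x : ℝ} (hx : Irrational x) (hx1 : 1 < x) (n : ℕ) : 1 ≤ pq x n := by
  have := cq_pos hx hx1 n
  exact Int.le_floor.mpr (by exact_mod_cast this.le)

lemma pq_succ_one_le {x : ℝ} (hx : Irrational x) (n : ℕ) : 1 ≤ pq x (n + 1) :=
  Int.le_floor.mpr (by exact_mod_cast (one_lt_cq_succ hx n).le)

lemma cq_succ_ne_zero {x : ℝ} (hx : Irrational x) (n : ℕ) : cq x (n + 1) ≠ 0 := by
  linarith [one_lt_cq_succ hx n]

lemma cq_eq {x : ℝ} (hx : Irrational x) (n : ℕ) :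
    cq x n = pq x n + (cq x (n + 1))⁻¹ := by
  have : cq x (n+1) = (Int.fract (cq x n))⁻¹ := rfl
  rw [this, inv_inv, pq, Int.fract]
  ring

lemma cq_period {x : ℝ} {T : ℕ} (h : cq x T = x) : ∀ k, cq x (k + T) = cq x k := by
  intro k
  induction k with
  | zero => simp only [Nat.zero_add]; exact h
  | succ k ih =>
    have : k + 1 + T = (k + T) + 1 := by omega
    rw [this]
    show (Int.fract (cq x (k+T)))⁻¹ = _
    rw [ih]; rfl

lemma cq_shift (x : ℝ) (T : ℕ) : ∀ k, cq (cq x T) k = cq x (k + T)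
  | 0 => by simp [cq]
  | k + 1 => by
    have : k + 1 + T = (k + T) + 1 := by omega
    rw [this]
    show (Int.fract (cq (cq x T) k))⁻¹ = (Int.fract (cq x (k + T)))⁻¹
    rw [cq_shift x T k]

lemma cq_unique {x y : ℝ} (hx : Irrational x) (hy : Irrational y)
    (h : ∀ n, pq x n = pq y n) : x = y := by
  -- one-step identity
  have step : ∀ n, cq x n - cq y n =
      (cq y (n+1) - cq x (n+1)) / (cq x (n+1) * cq y (n+1)) := by
    intro n
    have hx1 := one_lt_cq_succ hx n
    have hy1 := one_lt_cq_succ hy n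
    rw [cq_eq hx n, cq_eq hy n, h n]
    field_simp
    ring
  -- two-step contraction
  have pairx : ∀ n, 2 ≤ cq x (n+1) * cq x (n+2) := by
    intro n
    have h1 := one_lt_cq_succ hx (n+1)
    have h2 := cq_eq hx (n+1)
    have h3 := pq_succ_one_le hx n
    have h4 : (1:ℝ) ≤ (pq x (n+1) : ℝ) := by exact_mod_cast h3
    have h5 : cq x (n+2) ≠ 0 := by linarith
    calc (2:ℝ) ≤ 1 * cq x (n+2) + 1 := by linarith
    _ ≤ (pq x (n+1) : ℝ) * cq x (n+2) + 1 := by nlinarith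
    _ = cq x (n+1) * cq x (n+2) := by rw [h2]; field_simp
  have pairy : ∀ n, 2 ≤ cq y (n+1) * cq y (n+2) := by
    intro n
    have h1 := one_lt_cq_succ hy (n+1)
    have h2 := cq_eq hy (n+1)
    have h3 := pq_succ_one_le hy n
    have h4 : (1:ℝ) ≤ (pq y (n+1) : ℝ) := by exact_mod_cast h3
    have h5 : cq y (n+2) ≠ 0 := by linarith
    calc (2:ℝ) ≤ 1 * cq y (n+2) + 1 := by linarith
    _ ≤ (pq y (n+1) : ℝ) * cq y (n+2) + 1 := by nlinarith
    _ = cq y (n+1) * cq y (n+2) := by rw [h2]; field_simp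
  have one_step : ∀ n, |cq x n - cq y n| =
      |cq x (n+1) - cq y (n+1)| / (cq x (n+1) * cq y (n+1)) := by
    intro n
    have hx1 := one_lt_cq_succ hx n
    have hy1 := one_lt_cq_succ hy n
    have hpos : (0:ℝ) < cq x (n+1) * cq y (n+1) := by nlinarith
    rw [step n, abs_div, abs_of_pos hpos, abs_sub_comm]
  have two_step : ∀ n, |cq x n - cq y n| ≤ |cq x (n+2) - cq y (n+2)| / 4 := by
    intro n
    have hx1 := one_lt_cq_succ hx n
    have hy1 := one_lt_cq_succ hy n
    have hx2 := one_lt_cq_succ hx (n+1)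
    have hy2 := one_lt_cq_succ hy (n+1)
    have px := pairx n
    have py := pairy n
    have hpos1 : (0:ℝ) < cq x (n+1) * cq y (n+1) := by nlinarith
    have e2' : |cq x (n+1) - cq y (n+1)| = |cq x (n+2) - cq y (n+2)| / (cq x (n+2) * cq y (n+2)) := one_step (n+1)
    rw [one_step n, e2', div_div]
    have h4 : (4:ℝ) ≤ cq x (n+2) * cq y (n+2) * (cq x (n+1) * cq y (n+1)) := by nlinarith
    exact div_le_div_of_nonneg_left (abs_nonneg _) (by norm_num) h4
  have bound1 : ∀ n, |cq x n - cq y n| ≤ 1 := by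
    intro n
    have h1 : (pq x n : ℝ) ≤ cq x n := Int.floor_le _
    have h2 : cq x n < pq x n + 1 := Int.lt_floor_add_one _
    have h3 : (pq y n : ℝ) ≤ cq y n := Int.floor_le _
    have h4 : cq y n < pq y n + 1 := Int.lt_floor_add_one _
    have h5 : (pq x n : ℝ) = (pq y n : ℝ) := by exact_mod_cast h n
    rw [abs_le]
    constructor <;> linarith
  have main : ∀ m, |x - y| ≤ (1/4)^m := by
    intro m
    have key : ∀ m, |cq x 0 - cq y 0| ≤ |cq x (2*m) - cq y (2*m)| * (1/4)^m := by
      intro m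
      induction m with
      | zero => simp
      | succ k ih =>
        have h2 := two_step (2*k)
        have : 2 * (k+1) = 2*k + 2 := by ring
        rw [this]
        calc |cq x 0 - cq y 0| ≤ |cq x (2*k) - cq y (2*k)| * (1/4)^k := ih
        _ ≤ (|cq x (2*k+2) - cq y (2*k+2)| / 4) * (1/4)^k := by
            apply mul_le_mul_of_nonneg_right h2 (by positivity)
        _ = |cq x (2*k+2) - cq y (2*k+2)| * (1/4)^(k+1) := by ring
    calc |x - y| = |cq x 0 - cq y 0| := rfl
    _ ≤ |cq x (2*m) - cq y (2*m)| * (1/4)^m := key m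
    _ ≤ 1 * (1/4)^m := mul_le_mul_of_nonneg_right (bound1 _) (by positivity)
    _ = (1/4)^m := one_mul _
  have hzero : |x - y| ≤ 0 := by
    have ht : Filter.Tendsto (fun m : ℕ => ((1:ℝ)/4)^m) Filter.atTop (nhds 0) :=
      tendsto_pow_atTop_nhds_zero_of_lt_one (by norm_num) (by norm_num)
    exact ge_of_tendsto' ht main
  have h0 : |x - y| = 0 := le_antisymm hzero (abs_nonneg _)
  exact sub_eq_zero.mp (abs_eq_zero.mp h0)

noncomputable def cfA (x : ℝ) : ℕ → ℤ
  | 0 => 1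
  | 1 => pq x 0
  | n + 2 => pq x (n + 1) * cfA x (n + 1) + cfA x n


noncomputable def cfB (x : ℝ) : ℕ → ℤ
  | 0 => 0
  | 1 => 1
  | n + 2 => pq x (n + 1) * cfB x (n + 1) + cfB x n


lemma cf_rel {x : ℝ} (hx : Irrational x) :
    ∀ n, x * (cfB x (n+1) * cq x (n+1) + cfB x n) = cfA x (n+1) * cq x (n+1) + cfA x n := by
  intro n
  induction n with
  | zero =>
    have h := cq_eq hx 0
    have hz : cq x 1 ≠ 0 := by linarith [one_lt_cq_succ hx 0]
    simp only [cfA, cfB]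
    push_cast
    norm_num at h
    have h1 : cq x 0 * cq x 1 = pq x 0 * cq x 1 + 1 := by
      rw [h]; field_simp
    show cq x 0 * (1 * cq x 1 + 0) = (pq x 0 : ℝ) * cq x 1 + 1
    rw [one_mul, add_zero]; exact h1
  | succ k ih =>
    have hz : cq x (k+2) ≠ 0 := by linarith [one_lt_cq_succ hx (k+1)]
    have hrw : cq x (k+1) * cq x (k+2) = pq x (k+1) * cq x (k+2) + 1 := by
      rw [cq_eq hx (k+1)]; field_simp
    simp only [cfA, cfB]
    push_cast
    linear_combination cq x (k+2) * ih - (x * (cfB x (k+1) : ℝ) - (cfA x (k+1) : ℝ)) * hrw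


lemma cfA_ge {x : ℝ} (hx : Irrational x) (hx1 : 1 < x) :
    ∀ n, 1 ≤ cfA x n ∧ cfA x n ≤ cfA x (n+1) := by
  intro n
  induction n with
  | zero => exact ⟨le_refl _, by simpa [cfA] using pq_one_le hx hx1 0⟩
  | succ k ih =>
    obtain ⟨h1, h2⟩ := ih
    have ha : 1 ≤ pq x (k+1) := pq_succ_one_le hx k
    constructor
    · linarith
    · show cfA x (k+1) ≤ pq x (k+1) * cfA x (k+1) + cfA x k
      nlinarith


lemma cfB_ge {x : ℝ} (hx : Irrational x) :
    ∀ n, 0 ≤ cfB x n ∧ cfB x n ≤ cfB x (n+1) ∧ 1 ≤ cfB x (n+1) := by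
  intro n
  induction n with
  | zero => refine ⟨le_refl _, ?_, le_refl _⟩; simp [cfB]
  | succ k ih =>
    obtain ⟨h1, h2, h3⟩ := ih
    have ha : 1 ≤ pq x (k+1) := pq_succ_one_le hx k
    refine ⟨by linarith, ?_, ?_⟩
    · show cfB x (k+1) ≤ pq x (k+1) * cfB x (k+1) + cfB x k
      nlinarith
    · show 1 ≤ pq x (k+1) * cfB x (k+1) + cfB x k
      nlinarith

lemma quad_to_form {x : ℝ} (hx : Irrational x) {a b c : ℤ}
    (ha : 0 < a) (heq : (a:ℝ) * x^2 + b * x + c = 0) (hx1 : 1 < x)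
    (hr1 : -1 < -(b:ℝ)/a - x) (hr0 : -(b:ℝ)/a - x < 0) :
    ∃ (d : ℕ) (r t : ℚ), 2 ≤ d ∧ Squarefree d ∧ t ≠ 0 ∧
      x = (r : ℝ) + (t : ℝ) * Real.sqrt d ∧ 1 < x ∧
      -1 < (r : ℝ) - (t : ℝ) * Real.sqrt d ∧ (r : ℝ) - (t : ℝ) * Real.sqrt d < 0 := by
  have ha' : (0:ℝ) < a := by exact_mod_cast ha
  set Δ : ℤ := b^2 - 4*a*c with hΔdef
  have hkey : ((2*a*x + b))^2 = (Δ:ℝ) := by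
    push_cast [hΔdef]
    nlinarith [heq]
  have hppos : 0 < 2*(a:ℝ)*x + b := by
    -- 2ax + b = a(x - x') where x' = -b/a - x
    have : 2*(a:ℝ)*x + b = a * (x - (-(b:ℝ)/a - x)) := by field_simp; ring
    rw [this]
    apply mul_pos ha'
    linarith
  have hΔpos : 0 < Δ := by
    by_contra hle
    push_neg at hle
    have : ((2*a*x + b))^2 ≤ 0 := by rw [hkey]; exact_mod_cast hle
    nlinarith
  obtain ⟨d, e, hde, hsf⟩ := Nat.sq_mul_squarefree Δ.toNat
  have hΔnat : (Δ.toNat : ℤ) = Δ := Int.toNat_of_nonneg hΔpos.le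
  have he0 : e ≠ 0 := by
    rintro rfl
    simp at hde
    omega
  have hd0 : d ≠ 0 := by
    rintro rfl
    simp at hde
    omega
  have hsqrtΔ : Real.sqrt (Δ:ℝ) = 2*a*x + b := by
    rw [← hkey]
    exact Real.sqrt_sq hppos.le
  have hd1 : d ≠ 1 := by
    rintro rfl
    -- Δ = e^2, so x rational
    have : (Δ:ℝ) = (e:ℝ)^2 := by
      have : (e:ℤ)^2 = Δ := by rw [← hΔnat]; exact_mod_cast (by simpa using hde)
      exact_mod_cast this.symm
    have hs : Real.sqrt (Δ:ℝ) = e := by rw [this, Real.sqrt_sq (by positivity)]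
    have hxval : x = ((e:ℝ) - b) / (2*a) := by
      rw [hs] at hsqrtΔ
      field_simp
      linarith
    apply hx
    refine ⟨((e:ℚ) - b) / (2*a), ?_⟩
    rw [hxval]; push_cast; ring
  have hd2 : 2 ≤ d := by omega
  have hEd : Real.sqrt (Δ:ℝ) = e * Real.sqrt d := by
    have : (Δ:ℝ) = (e:ℝ)^2 * d := by
      have : ((e:ℤ)^2 * d) = Δ := by rw [← hΔnat]; exact_mod_cast hde
      exact_mod_cast this.symm
    rw [this, Real.sqrt_mul (by positivity), Real.sqrt_sq (by positivity)]
  have h2a : (2*(a:ℝ)) ≠ 0 := by positivity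
  have h1 : (e:ℝ) * Real.sqrt d = 2*a*x + b := by rw [← hEd, hsqrtΔ]
  have key : x = (-(b:ℝ) + (e:ℝ) * Real.sqrt d) / (2*a) := by
    rw [eq_div_iff h2a]; linear_combination -h1
  have keyc : ((-b : ℚ)/(2*a) : ℚ) - ((e:ℚ)/(2*a) : ℚ) * Real.sqrt d = -(b:ℝ)/a - x := by
    push_cast
    rw [key]
    have haa : (a:ℝ) ≠ 0 := ne_of_gt ha'
    field_simp
    ring
  refine ⟨d, (-b : ℚ)/(2*a), (e:ℚ)/(2*a), hd2, hsf, ?_, ?_, hx1, ?_, ?_⟩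
  · positivity
  · rw [key]; push_cast; ring
  · rw [keyc]; exact hr1
  · rw [keyc]; exact hr0

lemma backward {x : ℝ} (hx : Irrational x) {T : ℕ} (hT : 1 ≤ T)
    (hper : ∀ n, pq x (n + T) = pq x n) :
    ∃ (d : ℕ) (r t : ℚ), 2 ≤ d ∧ Squarefree d ∧ t ≠ 0 ∧
      x = (r : ℝ) + (t : ℝ) * Real.sqrt d ∧ 1 < x ∧
      -1 < (r : ℝ) - (t : ℝ) * Real.sqrt d ∧ (r : ℝ) - (t : ℝ) * Real.sqrt d < 0 := by
  obtain ⟨S, rfl⟩ : ∃ S, T = S + 1 := ⟨T - 1, by omega⟩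
  have hy : Irrational (cq x (S+1)) := cq_irrational hx (S+1)
  have hpq : ∀ n, pq (cq x (S+1)) n = pq x n := by
    intro n
    show ⌊cq (cq x (S+1)) n⌋ = pq x n
    rw [cq_shift]
    exact hper n
  have hfix : cq x (S+1) = x := cq_unique hy hx hpq
  have hx1 : 1 < x := hfix ▸ one_lt_cq_succ hx S
  have rel := cf_rel hx S
  rw [hfix] at rel
  set a : ℤ := cfB x (S+1) with hadef
  set b : ℤ := cfB x S - cfA x (S+1) with hbdef
  set c : ℤ := -(cfA x S) with hcdef
  have ha : 0 < a := by have := (cfB_ge hx S).2.2; omega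
  have ha' : (0:ℝ) < a := by exact_mod_cast ha
  have heq : (a:ℝ) * x^2 + b * x + c = 0 := by
    push_cast [hbdef, hcdef]
    linear_combination rel
  have hAS : 1 ≤ cfA x S := (cfA_ge hx hx1 S).1
  have hc0 : (c:ℝ) < 0 := by
    have h : c ≤ -1 := by omega
    have h' : (c:ℝ) ≤ -1 := by exact_mod_cast h
    linarith
  have hxx' : (a:ℝ) * x * (-(b:ℝ)/a - x) = c := by
    have hane : (a:ℝ) ≠ 0 := ne_of_gt ha'
    field_simp
    linear_combination -heq
  have hax : (0:ℝ) < (a:ℝ) * x := mul_pos ha' (by linarith)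
  have hr0 : -(b:ℝ)/a - x < 0 := by
    by_contra h
    push_neg at h
    have h2 := mul_nonneg hax.le h
    linarith [hxx']
  have hF : 1 ≤ a - b + c := by
    rcases S with _ | k
    · have h0 : 1 ≤ pq x 0 := pq_one_le hx hx1 0
      simp only [hadef, hbdef, hcdef, cfA, cfB]
      omega
    · have h1 := (cfB_ge hx (k+1)).2.1
      have h2 := (cfA_ge hx hx1 (k+1)).1
      have h3 := (cfA_ge hx hx1 k).1
      have h4 : 1 ≤ pq x (k+1) := pq_succ_one_le hx k
      have h5 : cfA x (k+2) = pq x (k+1) * cfA x (k+1) + cfA x k := rfl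
      have h2' := (cfA_ge hx hx1 (k+1)).1
      simp only [hadef, hbdef, hcdef]
      rw [h5]
      nlinarith
  have hprod : (a:ℝ) * (x + 1) * ((-(b:ℝ)/a - x) + 1) = (a:ℝ) - b + c := by
    have hane : (a:ℝ) ≠ 0 := ne_of_gt ha'
    field_simp
    linear_combination -heq
  have hr1 : -1 < -(b:ℝ)/a - x := by
    have hF' : (1:ℝ) ≤ (a:ℝ) - b + c := by exact_mod_cast hF
    by_contra h
    push_neg at h
    have h1 : -(b:ℝ)/a - x + 1 ≤ 0 := by linarith
    have hax1 : (0:ℝ) < (a:ℝ) * (x + 1) := mul_pos ha' (by linarith)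
    have h2 := mul_nonpos_of_nonneg_of_nonpos hax1.le h1
    rw [mul_assoc] at hprod
    linarith
  exact quad_to_form hx ha heq hx1 hr1 hr0

lemma neg_inv_bound {w : ℝ} (h : w < -1) : -1 < w⁻¹ ∧ w⁻¹ < 0 := by
  have hw0 : w < 0 := by linarith
  constructor
  · rw [show (-1:ℝ) = (-1)⁻¹ by norm_num]
    exact (inv_lt_inv_of_neg (by norm_num) hw0).mpr h
  · exact inv_lt_zero.mpr hw0


lemma descent (X C : ℕ → ℝ) (a : ℕ → ℤ)
    (hX : ∀ j, X j = a j + (X (j+1))⁻¹)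
    (hC : ∀ j, C (j+1) = (C j - a j)⁻¹)
    (ha : ∀ j, 1 ≤ a j) (hCb : ∀ j, -1 < C j ∧ C j < 0)
    {m n : ℕ} (hmn : m < n) (hXe : X m = X n) (hCe : C m = C n) :
    X 0 = X (n - m) := by
  -- key one-step back lemma: from equality at (j+1),(k+1) deduce at (j,k)
  have back : ∀ j k, X (j+1) = X (k+1) → C (j+1) = C (k+1) →
      X j = X k ∧ C j = C k := by
    intro j k hXjk hCjk
    -- recover partial quotient from conjugate
    have hrec : ∀ i, (-(C (i+1))⁻¹) = a i - C i := by
      intro i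
      rw [hC i]
      have hlt : C i - a i < -1 := by
        have h1 := (hCb i).2
        have h2 : (1:ℝ) ≤ (a i : ℝ) := by exact_mod_cast ha i
        linarith
      have hne : C i - a i ≠ 0 := by linarith
      rw [inv_inv]
      ring
    have hfloor : ∀ i, ⌊-(C (i+1))⁻¹⌋ = a i := by
      intro i
      rw [hrec i]
      have h1 := (hCb i).1
      have h2 := (hCb i).2
      rw [show ((a i : ℝ) - C i) = -C i + (a i : ℝ) by ring, Int.floor_add_intCast]
      have h0 : ⌊-C i⌋ = 0 := Int.floor_eq_zero_iff.mpr ⟨by linarith, by linarith⟩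
      omega
    have haeq : a j = a k := by rw [← hfloor j, ← hfloor k, hCjk]
    constructor
    · rw [hX j, hX k, haeq, hXjk]
    · have h1 := hrec j
      have h2 := hrec k
      have : C j = a j + (C (j+1))⁻¹ := by
        have := hrec j; linarith [hrec j]
      have h4 : C k = a k + (C (k+1))⁻¹ := by linarith [hrec k]
      rw [this, h4, haeq, hCjk]
  -- descend i steps
  have main : ∀ i, i ≤ m → X (m - i) = X (n - i) ∧ C (m - i) = C (n - i) := by
    intro i
    induction i with
    | zero => exact fun _ => ⟨hXe, hCe⟩
    | succ p ih =>
      intro hp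
      obtain ⟨h1, h2⟩ := ih (by omega)
      have e1 : m - p = (m - (p+1)) + 1 := by omega
      have e2 : n - p = (n - (p+1)) + 1 := by omega
      rw [e1, e2] at h1 h2
      exact back _ _ h1 h2
  have := (main m (le_refl m)).1
  simpa using this

noncomputable def PQ (x : ℝ) (D P0 Q0 : ℤ) : ℕ → ℤ × ℤ
  | 0 => (P0, Q0)
  | n + 1 =>
    (pq x n * (PQ x D P0 Q0 n).2 - (PQ x D P0 Q0 n).1,
     (D - (pq x n * (PQ x D P0 Q0 n).2 - (PQ x D P0 Q0 n).1)^2) / (PQ x D P0 Q0 n).2)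


def QInv (x : ℝ) (D P0 Q0 : ℤ) (n : ℕ) : Prop :=
  0 < (PQ x D P0 Q0 n).2 ∧
  (PQ x D P0 Q0 n).2 ∣ D - (PQ x D P0 Q0 n).1 ^ 2 ∧
  cq x n = ((PQ x D P0 Q0 n).1 + Real.sqrt D) / (PQ x D P0 Q0 n).2 ∧
  -1 < ((PQ x D P0 Q0 n).1 - Real.sqrt D) / (PQ x D P0 Q0 n).2 ∧
  ((PQ x D P0 Q0 n).1 - Real.sqrt D) / (PQ x D P0 Q0 n).2 < 0


lemma PQ_step {x : ℝ} {D P0 Q0 : ℤ} (hx : Irrational x) (hx1 : 1 < x)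
    (hD1 : 1 ≤ D) (hsD : Irrational (Real.sqrt (D : ℝ))) (n : ℕ)
    (h : QInv x D P0 Q0 n) :
    QInv x D P0 Q0 (n + 1) ∧
    ((PQ x D P0 Q0 (n+1)).1 - Real.sqrt D) / (PQ x D P0 Q0 (n+1)).2
      = (((PQ x D P0 Q0 n).1 - Real.sqrt D) / (PQ x D P0 Q0 n).2 - pq x n)⁻¹ := by
  obtain ⟨h1, h2, h3, h4, h5⟩ := h
  set P : ℤ := (PQ x D P0 Q0 n).1 with hPdef
  set Q : ℤ := (PQ x D P0 Q0 n).2 with hQdef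
  set a : ℤ := pq x n with hadef
  have hP' : (PQ x D P0 Q0 (n+1)).1 = a * Q - P := rfl
  have hQ'eq : (PQ x D P0 Q0 (n+1)).2 = (D - (a * Q - P)^2) / Q := rfl
  set P' : ℤ := a * Q - P with hP'def
  set Q' : ℤ := (D - P'^2) / Q with hQ'def
  have ha : 1 ≤ a := pq_one_le hx hx1 n
  have haR : (1:ℝ) ≤ (a:ℝ) := by exact_mod_cast ha
  have hQR : (0:ℝ) < (Q:ℝ) := by exact_mod_cast h1
  have hQne : (Q:ℝ) ≠ 0 := ne_of_gt hQR
  have hDR : (1:ℝ) ≤ (D:ℝ) := by exact_mod_cast hD1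
  have hsD0 : 0 < Real.sqrt (D:ℝ) := Real.sqrt_pos.mpr (by linarith)
  have hsq : Real.sqrt (D:ℝ) * Real.sqrt (D:ℝ) = (D:ℝ) :=
    Real.mul_self_sqrt (by linarith)
  -- D ≠ P'^2
  have hne_int : D - P'^2 ≠ 0 := by
    intro hzero
    apply hsD.ne_int |P'|
    have hDP : D = P'^2 := by omega
    have hcast : ((D:ℤ):ℝ) = ((P':ℤ):ℝ)^2 := by rw [hDP]; push_cast; ring
    rw [hcast, Real.sqrt_sq_eq_abs, ← Int.cast_abs]
  have hdvd' : Q ∣ D - P'^2 := by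
    have hrw : D - P'^2 = (D - P^2) - Q * (a*(a*Q - 2*P)) := by rw [hP'def]; ring
    rw [hrw]
    exact dvd_sub h2 (Dvd.intro _ rfl)
  have hQQ : Q' * Q = D - P'^2 := by
    rw [hQ'def]
    exact Int.ediv_mul_cancel hdvd'
  have hQ'ne : Q' ≠ 0 := by
    intro hz
    rw [hz, zero_mul] at hQQ
    exact hne_int hQQ.symm
  have hQ'neR : (Q':ℝ) ≠ 0 := by exact_mod_cast hQ'ne
  have hQQR : (Q':ℝ) * (Q:ℝ) = (D:ℝ) - (P':ℝ)^2 := by exact_mod_cast hQQ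
  -- √D ≠ ±P'
  have hsDP' : Real.sqrt (D:ℝ) - (P':ℝ) ≠ 0 := by
    intro hz
    exact hsD.ne_int P' (by linarith)
  have hsDP'' : (P':ℝ) + Real.sqrt (D:ℝ) ≠ 0 := by
    intro hz
    exact hsD.ne_int (-P') (by push_cast; linarith)
  -- fract computation
  have hfr : cq x (n+1) = ((Real.sqrt (D:ℝ) - (P':ℝ)) / (Q:ℝ))⁻¹ := by
    show (Int.fract (cq x n))⁻¹ = _
    congr 1
    have hfloor : ⌊cq x n⌋ = a := rfl
    rw [Int.fract, hfloor, h3]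
    push_cast [hP'def]
    field_simp
    ring
  -- new x formula
  have hx' : cq x (n+1) = ((P':ℝ) + Real.sqrt (D:ℝ)) / (Q':ℝ) := by
    rw [hfr, inv_div, div_eq_div_iff hsDP' hQ'neR]
    linear_combination hQQR - hsq
  -- conjugate relation
  have hden : ((P:ℝ) - Real.sqrt (D:ℝ)) / (Q:ℝ) - (a:ℝ)
      = (-((P':ℝ) + Real.sqrt (D:ℝ))) / (Q:ℝ) := by
    push_cast [hP'def]
    field_simp
    ring
  have hCrel : ((P':ℝ) - Real.sqrt (D:ℝ)) / (Q':ℝ)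
      = (((P:ℝ) - Real.sqrt (D:ℝ)) / (Q:ℝ) - (a:ℝ))⁻¹ := by
    rw [hden, inv_div, div_eq_div_iff hQ'neR (neg_ne_zero.mpr hsDP'')]
    linear_combination hsq - hQQR
  have hw : ((P:ℝ) - Real.sqrt (D:ℝ))/(Q:ℝ) - (a:ℝ) < -1 := by linarith
  have hb := neg_inv_bound hw
  have hC1' : -1 < ((P':ℝ) - Real.sqrt (D:ℝ))/(Q':ℝ) := by rw [hCrel]; exact hb.1
  have hC0' : ((P':ℝ) - Real.sqrt (D:ℝ))/(Q':ℝ) < 0 := by rw [hCrel]; exact hb.2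
  have hx1' : 1 < cq x (n+1) := one_lt_cq_succ hx n
  have hQ'pos : 0 < Q' := by
    rcases lt_trichotomy Q' 0 with hlt | heq0 | hgt
    · exfalso
      have hQ'R : (Q':ℝ) < 0 := by exact_mod_cast hlt
      have hdiff : cq x (n+1) - ((P':ℝ) - Real.sqrt (D:ℝ))/(Q':ℝ)
          = 2*Real.sqrt (D:ℝ)/(Q':ℝ) := by
        rw [hx']
        field_simp
        ring
      have hneg : 2*Real.sqrt (D:ℝ)/(Q':ℝ) < 0 :=
        div_neg_of_pos_of_neg (by linarith) hQ'R
      linarith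
    · exact absurd heq0 hQ'ne
    · exact hgt
  refine ⟨⟨?_, ?_, ?_, ?_, ?_⟩, ?_⟩
  · rw [hQ'eq]; exact hQ'pos
  · rw [hQ'eq, hP']; exact ⟨Q, hQQ.symm⟩
  · rw [hP', hQ'eq]; exact hx'
  · rw [hP', hQ'eq]; exact hC1'
  · rw [hP', hQ'eq]; exact hC0'
  · rw [hP', hQ'eq]; exact hCrel

lemma PQ_bounds {x : ℝ} {D P0 Q0 : ℤ} (hx : Irrational x) (hx1 : 1 < x)
    (hD1 : 1 ≤ D) (n : ℕ) (h : QInv x D P0 Q0 n) :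
    (PQ x D P0 Q0 n) ∈ Finset.Icc ((1:ℤ), (1:ℤ)) (D, 2*D) := by
  obtain ⟨h1, h2, h3, h4, h5⟩ := h
  set P : ℤ := (PQ x D P0 Q0 n).1
  set Q : ℤ := (PQ x D P0 Q0 n).2
  have hQR : (0:ℝ) < (Q:ℝ) := by exact_mod_cast h1
  have hDR : (1:ℝ) ≤ (D:ℝ) := by exact_mod_cast hD1
  have hsD0 : 0 < Real.sqrt (D:ℝ) := Real.sqrt_pos.mpr (by linarith)
  have hsqm : Real.sqrt (D:ℝ) * Real.sqrt (D:ℝ) = (D:ℝ) := Real.mul_self_sqrt (by linarith)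
  have hsDD : Real.sqrt (D:ℝ) ≤ (D:ℝ) := by nlinarith [hsqm, hsD0, hDR]
  have hcq := cq_pos hx hx1 n
  rw [h3] at hcq
  -- P > 0 : from X + C > 0
  have hsum : 0 < 2*(P:ℝ)/(Q:ℝ) := by
    have : ((P:ℝ) + Real.sqrt D)/(Q:ℝ) + ((P:ℝ) - Real.sqrt D)/(Q:ℝ) = 2*(P:ℝ)/(Q:ℝ) := by
      field_simp; ring
    linarith
  have hP0 : 0 < (P:ℝ) := by
    by_contra hc
    push_neg at hc
    have : 2*(P:ℝ)/(Q:ℝ) ≤ 0 := div_nonpos_of_nonpos_of_nonneg (by linarith) hQR.le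
    linarith
  have hP1 : 1 ≤ P := by
    have : (0:ℤ) < P := by exact_mod_cast hP0
    omega
  -- P < √D from C < 0
  have hPsD : (P:ℝ) < Real.sqrt (D:ℝ) := by
    have := (div_neg_iff).mp h5
    rcases this with ⟨hnum, _⟩ | ⟨_, hden⟩
    · linarith
    · linarith
  have hPD : P ≤ D := by
    have : (P:ℝ) < (D:ℝ) := lt_of_lt_of_le hPsD hsDD
    exact_mod_cast le_of_lt (by exact_mod_cast this : P < D)
  -- Q < P + √D from X > 1
  have hQlt : (Q:ℝ) < (P:ℝ) + Real.sqrt (D:ℝ) := by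
    have := (one_lt_div hQR).mp hcq
    linarith
  have hQ2D : Q ≤ 2*D := by
    have : (Q:ℝ) < 2*(D:ℝ) := by linarith
    have : Q < 2*D := by exact_mod_cast this
    omega
  rw [Finset.mem_Icc]
  exact ⟨⟨hP1, h1⟩, ⟨hPD, hQ2D⟩⟩

lemma forward {x : ℝ} (d : ℕ) (r t : ℚ) (hd2 : 2 ≤ d) (hsf : Squarefree d)
    (ht : t ≠ 0) (hxeq : x = (r:ℝ) + (t:ℝ) * Real.sqrt d) (hx1 : 1 < x)
    (hc1 : -1 < (r:ℝ) - (t:ℝ) * Real.sqrt d) (hc0 : (r:ℝ) - (t:ℝ) * Real.sqrt d < 0) :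
    Irrational x ∧ ∃ T : ℕ, 1 ≤ T ∧ ∀ n, pq x (n + T) = pq x n := by
  -- d is not a square
  have hdns : ¬ IsSquare d := by
    rintro ⟨k, hk⟩
    have : IsUnit k := hsf k (by rw [hk])
    rw [Nat.isUnit_iff] at this
    rw [this] at hk
    simp at hk
    omega
  have hirr : Irrational (Real.sqrt d) := irrational_sqrt_natCast_iff.mpr hdns
  have hx : Irrational x := by
    rw [hxeq]
    exact (hirr.ratCast_mul ht).ratCast_add (q := r)
  have hsd0 : (0:ℝ) < Real.sqrt d := Real.sqrt_pos.mpr (by positivity)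
  have htpos : (0:ℝ) < (t:ℝ) := by
    rcases lt_trichotomy ((t:ℝ)) 0 with hlt | heq | hgt
    · nlinarith
    · exact absurd (by exact_mod_cast heq) ht
    · exact hgt
  have htq0 : (0:ℚ) < t := by exact_mod_cast htpos
  -- integer data
  set q : ℤ := (r.den : ℤ) * (t.den : ℤ) with hqdef
  set p : ℤ := r.num * (t.den : ℤ) with hpdef
  set u : ℤ := t.num * (r.den : ℤ) with hudef
  have hq0 : 0 < q := by positivity
  have hu0 : 0 < u := by
    have := Rat.num_pos.mpr htq0
    positivity
  have hqR : (0:ℝ) < (q:ℝ) := by exact_mod_cast hq0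
  have hrdenR : ((r.den:ℝ)) ≠ 0 := by positivity
  have htdenR : ((t.den:ℝ)) ≠ 0 := by positivity
  have hrq : (r:ℝ) = (p:ℝ) / (q:ℝ) := by
    rw [Rat.cast_def]
    push_cast [hpdef, hqdef]
    field_simp
  have htu : (t:ℝ) = (u:ℝ) / (q:ℝ) := by
    rw [Rat.cast_def]
    push_cast [hudef, hqdef]
    field_simp
  set D : ℤ := u^2 * (d:ℤ) * q^2 with hDdef
  have hD1 : 1 ≤ D := by
    have : 0 < D := by positivity
    omega
  have hsDval : Real.sqrt (D:ℝ) = (u:ℝ) * (q:ℝ) * Real.sqrt d := by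
    have h1 : (D:ℝ) = ((u:ℝ)*(q:ℝ))^2 * (d:ℝ) := by push_cast [hDdef]; ring
    rw [h1, Real.sqrt_mul (sq_nonneg _), Real.sqrt_sq (by positivity)]
  have hsD : Irrational (Real.sqrt (D:ℝ)) := by
    rw [hsDval]
    have : Irrational (((u*q : ℤ):ℝ) * Real.sqrt d) := hirr.intCast_mul (ne_of_gt (mul_pos hu0 hq0))
    convert this using 2
    push_cast
    ring
  -- base case of invariant
  have base : QInv x D (p*q) (q^2) 0 := by
    have h20 : (PQ x D (p*q) (q^2) 0).1 = p*q := rfl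
    have h21 : (PQ x D (p*q) (q^2) 0).2 = q^2 := rfl
    unfold QInv
    rw [h20, h21]
    refine ⟨by positivity, ⟨u^2*(d:ℤ) - p^2, by rw [hDdef]; ring⟩, ?_, ?_, ?_⟩
    · show x = (((p*q : ℤ):ℝ) + Real.sqrt (D:ℝ)) / ((q^2 : ℤ):ℝ)
      rw [hsDval]
      rw [hxeq, hrq, htu]
      push_cast
      field_simp
    · show -1 < (((p*q : ℤ):ℝ) - Real.sqrt (D:ℝ)) / ((q^2 : ℤ):ℝ)
      have : (((p*q : ℤ):ℝ) - Real.sqrt (D:ℝ)) / ((q^2 : ℤ):ℝ)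
          = (r:ℝ) - (t:ℝ) * Real.sqrt d := by
        rw [hsDval, hrq, htu]
        push_cast
        field_simp
      rw [this]; exact hc1
    · show (((p*q : ℤ):ℝ) - Real.sqrt (D:ℝ)) / ((q^2 : ℤ):ℝ) < 0
      have : (((p*q : ℤ):ℝ) - Real.sqrt (D:ℝ)) / ((q^2 : ℤ):ℝ)
          = (r:ℝ) - (t:ℝ) * Real.sqrt d := by
        rw [hsDval, hrq, htu]
        push_cast
        field_simp
      rw [this]; exact hc0
  have inv : ∀ n, QInv x D (p*q) (q^2) n := by
    intro n
    induction n with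
    | zero => exact base
    | succ k ih => exact (PQ_step hx hx1 hD1 hsD k ih).1
  have Crel := fun n => (PQ_step hx hx1 hD1 hsD n (inv n)).2
  -- pigeonhole
  set S := Finset.Icc ((1:ℤ), (1:ℤ)) (D, 2*D) with hSdef
  obtain ⟨m, hm, n, hn, hmn, hPQeq⟩ :=
    Finset.exists_ne_map_eq_of_card_lt_of_maps_to
      (s := Finset.range (S.card + 1)) (t := S)
      (by rw [Finset.card_range]; omega)
      (fun a _ => PQ_bounds hx hx1 hD1 a (inv a))
  -- wlog
  have key : ∀ m n : ℕ, m < n → PQ x D (p*q) (q^2) m = PQ x D (p*q) (q^2) n →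
      ∃ T : ℕ, 1 ≤ T ∧ cq x T = x := by
    intro m n hlt he
    have hXe : cq x m = cq x n := by
      rw [(inv m).2.2.1, (inv n).2.2.1, he]
    have hCe : ((PQ x D (p*q) (q^2) m).1 - Real.sqrt (D:ℝ)) / ((PQ x D (p*q) (q^2) m).2 : ℝ)
        = ((PQ x D (p*q) (q^2) n).1 - Real.sqrt (D:ℝ)) / ((PQ x D (p*q) (q^2) n).2 : ℝ) := by
      rw [he]
    have hdes := descent (cq x)
      (fun j => ((PQ x D (p*q) (q^2) j).1 - Real.sqrt (D:ℝ)) / ((PQ x D (p*q) (q^2) j).2 : ℝ))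
      (pq x) (cq_eq hx) Crel (pq_one_le hx hx1)
      (fun j => ⟨(inv j).2.2.2.1, (inv j).2.2.2.2⟩) hlt hXe hCe
    exact ⟨n - m, by omega, by rw [← hdes]; rfl⟩
  have hTfix : ∃ T : ℕ, 1 ≤ T ∧ cq x T = x := by
    rcases Ne.lt_or_gt hmn with h | h
    · exact key m n h hPQeq
    · exact key n m h hPQeq.symm
  obtain ⟨T, hT1, hTfix⟩ := hTfix
  refine ⟨hx, T, hT1, fun k => ?_⟩
  show ⌊cq x (k + T)⌋ = ⌊cq x k⌋
  rw [cq_period hTfix k]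

/-- Galois, 1828: `x` is a reduced quadratic irrational iff `x` is
irrational and its continued fraction expansion is purely periodic. -/
theorem stmt4 (x : ℝ) :
    (∃ (d : ℕ) (r t : ℚ), 2 ≤ d ∧ Squarefree d ∧ t ≠ 0 ∧
        x = (r : ℝ) + (t : ℝ) * Real.sqrt d ∧ 1 < x ∧
        -1 < (r : ℝ) - (t : ℝ) * Real.sqrt d ∧ (r : ℝ) - (t : ℝ) * Real.sqrt d < 0)
    ↔ (Irrational x ∧ ∃ T : ℕ, 1 ≤ T ∧ ∀ n, pq x (n + T) = pq x n) := by
  constructor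
  · rintro ⟨d, r, t, hd2, hsf, ht, hxeq, hx1, hc1, hc0⟩
    exact forward d r t hd2 hsf ht hxeq hx1 hc1 hc0
  · rintro ⟨hx, T, hT, hper⟩
    exact backward hx hT hper
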